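/- Let f₀ : ℝⁿ → ℝ be convex and f₁, ..., fₚ : ℝⁿ → ℝ be concave, and suppose there exists x₀ with fᵢ(x₀) > 0 for all i = 1,...,p. If (fᵢ(x) ≥ 0 for all i = 1,...,p) implies f₀(x) ≥ 0 for all x ∈ ℝⁿ, then there exist α₁,...,αₚ ≥ 0 such that f₀(x) - Σᵢ αᵢ fᵢ(x) ≥ 0 for all x ∈ ℝⁿ. -/

import Mathlib

private lemma aux_comb (a b r1 r2 c1 c2 : ℝ) (ha : 0 ≤ a) (hb : 0 ≤ b)
    (hab : a + b = 1) (h1 : c1 < r1) (h2 : c2 < r2) :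
    a * c1 + b * c2 < a * r1 + b * r2 := by
  rcases ha.lt_or_eq with ha' | ha'
  · have h1' : a * c1 < a * r1 := by nlinarith
    have h2' : b * c2 ≤ b * r2 := by nlinarith
    linarith
  · have ha0 : a = 0 := ha'.symm
    subst ha0
    have hb1 : b = 1 := by linarith
    subst hb1
    simpa using h2

private lemma aux_lim (a b : ℝ) (h : ∀ t > (0:ℝ), a + t * b < 0) : b ≤ 0 ∧ a ≤ 0 := by
  have hb : b ≤ 0 := by
    by_contra hb
    push_neg at hb
    have ht : (0:ℝ) < max 1 ((1 - a) / b) := lt_of_lt_of_le one_pos (le_max_left _ _)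
    have h1 := h _ ht
    have h2 : (1 - a) / b * b ≤ max 1 ((1 - a) / b) * b :=
      mul_le_mul_of_nonneg_right (le_max_right _ _) hb.le
    rw [div_mul_cancel₀ _ hb.ne'] at h2
    linarith
  refine ⟨hb, ?_⟩
  by_contra ha
  push_neg at ha
  rcases hb.lt_or_eq with hb' | hb'
  · have ht : (0:ℝ) < a / (-2 * b) := div_pos ha (by linarith)
    have h1 := h _ ht
    have heq : a / (-2 * b) * b = -(a / 2) := by
      field_simp
      rw [div_self hb'.ne]
    rw [heq] at h1
    linarith
  · have h1 := h 1 one_pos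
    rw [← hb'] at h1
    linarith

theorem s_procedure_convex_concave (n p : ℕ)
    (f0 : (Fin n → ℝ) → ℝ) (f : Fin p → (Fin n → ℝ) → ℝ)
    (hf0 : ConvexOn ℝ Set.univ f0) (hf : ∀ i, ConcaveOn ℝ Set.univ (f i))
    (hS : ∃ x0 : Fin n → ℝ, ∀ i, 0 < f i x0)
    (hI : ∀ x, (∀ i, 0 ≤ f i x) → 0 ≤ f0 x) :
    ∃ α : Fin p → ℝ, (∀ i, 0 ≤ α i) ∧ ∀ x, 0 ≤ f0 x - ∑ i, α i * f i x := by
  classical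
  obtain ⟨x0, hx0⟩ := hS
  set A : Set (ℝ × (Fin p → ℝ)) :=
    {q | ∃ x, f0 x < q.1 ∧ ∀ i, q.2 i < f i x} with hAdef
  -- A is convex
  have hAconv : Convex ℝ A := by
    rintro ⟨r1, s1⟩ ⟨x1, h1, h1'⟩ ⟨r2, s2⟩ ⟨x2, h2, h2'⟩ a b ha hb hab
    refine ⟨a • x1 + b • x2, ?_, ?_⟩
    · have hc := hf0.2 (Set.mem_univ x1) (Set.mem_univ x2) ha hb hab
      simp only [smul_eq_mul] at hc
      have := aux_comb a b r1 r2 (f0 x1) (f0 x2) ha hb hab h1 h2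
      simpa using lt_of_le_of_lt hc this
    · intro i
      have hc := (hf i).2 (Set.mem_univ x1) (Set.mem_univ x2) ha hb hab
      simp only [smul_eq_mul] at hc
      have := aux_comb a b (f i x1) (f i x2) (s1 i) (s2 i) ha hb hab (h1' i) (h2' i)
      simpa using lt_of_lt_of_le this hc
  -- A is open
  have hAopen : IsOpen A := by
    have : A = ⋃ x : Fin n → ℝ,
        ({q : ℝ × (Fin p → ℝ) | f0 x < q.1} ∩ ⋂ i, {q | q.2 i < f i x}) := by
      ext q
      simp [hAdef, Set.mem_iInter, and_comm]
    rw [this]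
    refine isOpen_iUnion fun x => IsOpen.inter ?_ (isOpen_iInter_of_finite fun i => ?_)
    · exact isOpen_lt continuous_const continuous_fst
    · exact isOpen_lt ((continuous_apply i).comp continuous_snd) continuous_const
  -- 0 ∉ A
  have h0A : (0 : ℝ × (Fin p → ℝ)) ∉ A := by
    rintro ⟨x, hx1, hx2⟩
    have := hI x fun i => (hx2 i).le
    simp only [Prod.fst_zero] at hx1
    linarith
  obtain ⟨φ, hφ⟩ := geometric_hahn_banach_open_point hAconv hAopen h0A
  have hφ0 : ∀ q ∈ A, φ q < 0 := by
    intro q hq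
    have := hφ q hq
    simpa using this
  set e0 : ℝ × (Fin p → ℝ) := (1, 0) with he0
  set e : Fin p → ℝ × (Fin p → ℝ) := fun i => (0, Pi.single i (1:ℝ)) with he
  set l0 : ℝ := φ e0 with hl0
  set l : Fin p → ℝ := fun i => φ (e i) with hl
  -- decomposition of φ
  have hdecomp : ∀ q : ℝ × (Fin p → ℝ), φ q = l0 * q.1 + ∑ i, l i * q.2 i := by
    intro q
    have hq : q = q.1 • e0 + ∑ i, q.2 i • e i := by
      refine Prod.ext ?_ ?_
      · simp [he0, he, Prod.fst_sum]
      · simp only [he0, he, Prod.snd_add, Prod.smul_snd, Prod.snd_sum, smul_zero]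
        funext j
        simp [Finset.sum_apply, Pi.single_apply, mul_ite, Finset.sum_ite_eq]
    conv_lhs => rw [hq]
    rw [map_add, map_smul, map_sum]
    simp only [map_smul, smul_eq_mul]
    rw [hl0, hl]
    congr 1
    · ring
    · exact Finset.sum_congr rfl fun i _ => by ring
  -- main limit inequality
  have hL : ∀ x, l0 * f0 x + ∑ i, l i * f i x ≤ 0 := by
    intro x
    have key : ∀ t > (0:ℝ),
        (l0 * f0 x + ∑ i, l i * f i x) + t * (l0 - ∑ i, l i) < 0 := by
      intro t ht
      have hmem' : ((f0 x + t, fun i => f i x - t) : ℝ × (Fin p → ℝ)) ∈ A :=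
        ⟨x, by simp [ht], fun i => by simp [ht]⟩
      have hv := hφ0 _ hmem'
      rw [hdecomp] at hv
      simp only at hv
      have hsum : ∑ i, l i * (f i x - t) = (∑ i, l i * f i x) - t * ∑ i, l i := by
        rw [Finset.mul_sum, ← Finset.sum_sub_distrib]
        exact Finset.sum_congr rfl fun i _ => by ring
      rw [hsum] at hv
      have hring : l0 * (f0 x + t) + ((∑ i, l i * f i x) - t * ∑ i, l i)
          = (l0 * f0 x + ∑ i, l i * f i x) + t * (l0 - ∑ i, l i) := by ring
      rw [hring] at hv
      exact hv
    exact (aux_lim _ _ key).2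
  -- l0 ≤ 0
  have hl0le : l0 ≤ 0 := by
    have key : ∀ t > (0:ℝ),
        (l0 * f0 x0 + ∑ i, l i * (f i x0 - 1)) + t * l0 < 0 := by
      intro t ht
      have hmem' : ((f0 x0 + t, fun i => f i x0 - 1) : ℝ × (Fin p → ℝ)) ∈ A :=
        ⟨x0, by simp [ht], fun i => by simp⟩
      have hv := hφ0 _ hmem'
      rw [hdecomp] at hv
      simp only at hv
      have hring : l0 * (f0 x0 + t) = l0 * f0 x0 + t * l0 := by ring
      rw [hring] at hv
      linarith
    exact (aux_lim _ _ key).1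
  -- l i ≥ 0
  have hlnn : ∀ j, 0 ≤ l j := by
    intro j
    have key : ∀ t > (0:ℝ),
        (l0 * (f0 x0 + 1) + ∑ i, l i * (f i x0 - if i = j then 0 else 1)) + t * (-l j) < 0 := by
      intro t ht
      have hmem' : ((f0 x0 + 1, fun i => f i x0 - if i = j then t else 1) :
          ℝ × (Fin p → ℝ)) ∈ A :=
        ⟨x0, by simp, fun i => by by_cases h : i = j <;> simp [h, ht]⟩
      have hv := hφ0 _ hmem'
      rw [hdecomp] at hv
      simp only at hv
      have hsum : ∑ i, l i * (f i x0 - if i = j then t else 1)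
          = (∑ i, l i * (f i x0 - if i = j then 0 else 1)) - t * l j := by
        have hterm : ∀ i ∈ Finset.univ, l i * (f i x0 - if i = j then t else 1)
            = l i * (f i x0 - if i = j then 0 else 1) - (if i = j then t * l j else 0) := by
          intro i _
          by_cases h : i = j <;> simp [h] <;> ring
        rw [Finset.sum_congr rfl hterm, Finset.sum_sub_distrib,
          Finset.sum_ite_eq' Finset.univ j]
        simp
      rw [hsum] at hv
      linarith
    have := (aux_lim _ _ key).1
    linarith
  rcases hl0le.lt_or_eq with hl0neg | hl0zero
  · -- l0 < 0, main case
    refine ⟨fun i => l i / (-l0), fun i => div_nonneg (hlnn i) (by linarith), ?_⟩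
    intro x
    have hLx := hL x
    have hsum : ∑ i, l i / (-l0) * f i x = (∑ i, l i * f i x) / (-l0) := by
      rw [Finset.sum_div]
      exact Finset.sum_congr rfl fun i _ => by ring
    rw [hsum, sub_nonneg, div_le_iff₀ (by linarith : (0:ℝ) < -l0)]
    nlinarith
  · -- l0 = 0: contradiction with Slater point
    exfalso
    have hLx0 := hL x0
    rw [hl0zero] at hLx0
    simp only [zero_mul, zero_add] at hLx0
    have hall : ∀ i, l i = 0 := by
      intro i
      by_contra hne
      have hpos : 0 < l i := (hlnn i).lt_of_ne (Ne.symm hne)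
      have : 0 < ∑ j, l j * f j x0 := by
        apply Finset.sum_pos' (fun j _ => mul_nonneg (hlnn j) (hx0 j).le)
        exact ⟨i, Finset.mem_univ i, mul_pos hpos (hx0 i)⟩
      linarith
    have hmem' : ((f0 x0 + 1, fun i => f i x0 - 1) : ℝ × (Fin p → ℝ)) ∈ A :=
      ⟨x0, by simp, fun i => by simp⟩
    have hv := hφ0 _ hmem'
    rw [hdecomp] at hv
    simp [hall, hl0zero] at hv
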